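/- Let α > 0, h > 0, 0 < ε < 1, U > 0 and β be reals satisfying conditions (C1) 0 < αh < 2/3, (C2) 0 < β < A(αh,ε) < 1, (C4) 1 − 2αh(1 − ε) + (αh)²ε(1 + ε) ≥ 0, and (C3) δ(h,αh,β) < ε. Suppose the quaternion sequence (q_k) satisfies q_{k+1} = (1 − αh(‖q_k‖² − 1)) q_k + (h/2) q_k w_k with each w_k pure imaginary, and let e_k = ‖q_k‖² − 1. If at step k one has ‖w_k‖ ≤ U and δ(h,αh,0) < |e_k| ≤ δ(h,αh,β), then |e_{k+1}| ≤ |e_k|. -/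
import Mathlib

set_option maxHeartbeats 1000000 in
private theorem Q2_ineq (a e : ℝ) (ha : 0 < a) (ha2 : a < 2/3) (he0 : 0 < e) (he1 : e < 1)
    (hPs : 0 ≤ 1 - 2*a*(1-e) + a^2*(e*(1+e))) :
    a*(1-e)*(2-a*e)*(2-2*a-a*(2-a)*e+a^2*e^2) ≤ (2-2*a)^2*(1+e)^2 := by
  set L1 := a*(1-e)*(2-a*e) with hL1def
  set L2 := 2-2*a-a*(2-a)*e+a^2*e^2 with hL2def
  have hL1 : 0 < L1 := by
    apply mul_pos (mul_pos ha (by linarith)); nlinarith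
  have hL2 : 0 < L2 := by
    rw [hL2def]; nlinarith [sq_nonneg (2*a*e - (2-a))]
  have hS : L1 + L2 ≤ 4*(1-a)*(1+e) := by
    rw [hL1def, hL2def]
    nlinarith [mul_nonneg hPs he0.le, sq_nonneg (a*e), mul_pos ha he0]
  calc L1 * L2 ≤ ((L1+L2)/2)^2 := by nlinarith [sq_nonneg (L1-L2)]
    _ ≤ (2-2*a)^2*(1+e)^2 := by nlinarith [mul_pos hL1 hL2]

set_option maxHeartbeats 1000000 in
private theorem Q1_ineq (a e : ℝ) (ha : 0 < a) (ha2 : a < 2/3) (he0 : 0 < e) (he1 : e < 1) :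
    (1-e)*(2-2*a-a*(2-a)*e+a^2*e^2)
      ≤ (1+e)^2*a*(2-a*e) + 2*(1-2*a*(1-e)+a^2*(e*(1+e)))*(1+e) := by
  nlinarith [sq_nonneg (1-2*a), sq_nonneg e, sq_nonneg (a*e), mul_pos he0 ha,
    sq_nonneg (a-e), sq_nonneg (a+e),
    mul_nonneg (mul_nonneg he0.le ha.le) (sub_nonneg.2 he1.le)]

set_option maxHeartbeats 1000000 in
private theorem key_alg (a e t c R : ℝ)
    (ha : 0 < a) (ha2 : a < 2/3) (he0 : 0 < e) (he1 : e < 1)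
    (hPs : 0 ≤ 1 - 2*a*(1-e) + a^2*(e*(1+e)))
    (ht : |t| < e) (hc : 0 < c)
    (h8 : 2*c*((1 - 2*a*(1-e) + a^2*(e*(1+e)))*(e*(1+e))) + (1+e)^2*c^2
        < (a*(1-e)*(2-a*e)*(2-2*a-a*(2-a)*e+a^2*e^2)) * t^2)
    (hR0 : 0 ≤ R) (hRc : R ≤ c*(1+t)) :
    |t*(1-2*a-2*a*t+a^2*t+a^2*t^2) + R| ≤ |t| := by
  obtain ⟨htl, htu⟩ := abs_lt.mp ht
  have hPse : 0 ≤ (1 - 2*a*(1-e) + a^2*(e*(1+e)))*(e*(1+e)) := by positivity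
  have h1t : 0 < 1 + t := by linarith
  have h2ae : 0 < 2 - a*e := by nlinarith
  have h2at : 2 - a*e ≤ 2 - a*t := by nlinarith
  rcases le_or_gt 0 t with htp | htn
  · -- t ≥ 0
    have ht0 : 0 < t := by
      rcases htp.eq_or_lt with h0 | h0
      · exfalso; rw [← h0] at h8; nlinarith [sq_nonneg c]
      · exact h0
    have hq1'' := Q1_ineq a e ha ha2 he0 he1
    have hstep1 : (1-e)*(2-2*a-a*(2-a)*e+a^2*e^2)*t
        ≤ (1+e)^2*a*(2-a*e)*t + 2*(1-2*a*(1-e)+a^2*(e*(1+e)))*(1+e)*e := by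
      rcases le_or_gt ((1-e)*(2-2*a-a*(2-a)*e+a^2*e^2)) ((1+e)^2*a*(2-a*e)) with hcmp | hcmp
      · nlinarith [mul_nonneg (sub_nonneg.2 hcmp) ht0.le, mul_nonneg hPs he0.le]
      · nlinarith [mul_le_mul_of_nonneg_left htu.le (sub_nonneg.2 hcmp.le)]
    have hat : 0 < a*t := mul_pos ha ht0
    have hq1 : (a*(1-e)*(2-a*e)*(2-2*a-a*(2-a)*e+a^2*e^2)) * t^2
        ≤ (1+e)^2*(a*t*(2-a*t))^2
          + 2*(a*t*(2-a*t))*((1 - 2*a*(1-e) + a^2*(e*(1+e)))*(e*(1+e))) := by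
      have hm : (a*(1-e)*(2-a*e)*(2-2*a-a*(2-a)*e+a^2*e^2)) * t^2
          ≤ a*t*((2-a*e)*((1+e)^2*a*(2-a*e)*t + 2*(1-2*a*(1-e)+a^2*(e*(1+e)))*(1+e)*e)) := by
        have := mul_le_mul_of_nonneg_left
          (mul_le_mul_of_nonneg_left hstep1 h2ae.le) hat.le
        nlinarith [this]
      have hmono : a*t*((2-a*e)*((1+e)^2*a*(2-a*e)*t + 2*(1-2*a*(1-e)+a^2*(e*(1+e)))*(1+e)*e))
          ≤ (1+e)^2*(a*t*(2-a*t))^2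
            + 2*(a*t*(2-a*t))*((1 - 2*a*(1-e) + a^2*(e*(1+e)))*(e*(1+e))) := by
        nlinarith [mul_pos hat h2ae, sq_nonneg (a*t),
          mul_nonneg (mul_nonneg hat.le (sub_nonneg.2 h2at)) hPse,
          mul_nonneg (mul_nonneg (mul_nonneg hat.le hat.le) (sub_nonneg.2 h2at))
            (by linarith : (0:ℝ) ≤ (2-a*e)+(2-a*t)),
          sq_nonneg ((1+e)*(a*t))]
      linarith
    have hcc : c < a*t*(2-a*t) := by
      by_contra hcon
      push_neg at hcon
      nlinarith [mul_nonneg (sub_nonneg.2 hcon) hPse,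
        mul_nonneg (sub_nonneg.2 hcon)
          (by nlinarith : (0:ℝ) ≤ c + a*t*(2-a*t)),
        sq_nonneg (1+e)]
    have hub : t*(1-2*a-2*a*t+a^2*t+a^2*t^2) + R ≤ t := by
      nlinarith [mul_lt_mul_of_pos_right hcc h1t]
    have hlb : -t ≤ t*(1-2*a-2*a*t+a^2*t+a^2*t^2) + R := by
      have h1P : 0 ≤ 1 + (1-2*a-2*a*t+a^2*t+a^2*t^2) := by
        nlinarith [mul_nonneg (sub_nonneg.2 htu.le)
          (mul_nonneg ha.le (by nlinarith : (0:ℝ) ≤ 2-a-a*(t+e))),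
          sq_nonneg (2*a*e-(2-a))]
      nlinarith [mul_nonneg htp h1P]
    rw [abs_of_nonneg htp]
    exact abs_le.mpr ⟨hlb, hub⟩
  · -- t < 0
    have hQ2 := Q2_ineq a e ha ha2 he0 he1 hPs
    have hcb : c < (2-2*a)*(-t) := by
      by_contra hcon
      push_neg at hcon
      have h2a : 0 < (2-2*a)*(-t) := by
        apply mul_pos <;> linarith
      nlinarith [mul_le_mul hcon hcon h2a.le hc.le, sq_nonneg (1+e), mul_pos hc hc,
        mul_le_mul_of_nonneg_right hQ2 (sq_nonneg t)]
    have hub : t*(1-2*a-2*a*t+a^2*t+a^2*t^2) + R ≤ -t := by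
      have h1 : R ≤ c := by nlinarith
      have h2 : (2-2*a)*(-t) ≤ (-t)*(1+(1-2*a-2*a*t+a^2*t+a^2*t^2)) := by
        nlinarith [mul_nonneg (neg_nonneg.2 htn.le)
            (mul_nonneg (mul_nonneg ha.le ha.le) (neg_nonneg.2 htn.le)),
          mul_nonneg (neg_nonneg.2 htn.le)
            (mul_nonneg ha.le (by linarith : (0:ℝ) ≤ 2-a))]
      have h3 : (-t)*(1+(1-2*a-2*a*t+a^2*t+a^2*t^2))
          = -t - t*(1-2*a-2*a*t+a^2*t+a^2*t^2) := by ring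
      linarith
    have hlb : t ≤ t*(1-2*a-2*a*t+a^2*t+a^2*t^2) + R := by
      nlinarith [mul_nonneg (neg_nonneg.2 htn.le)
        (mul_nonneg (mul_nonneg ha.le h1t.le) (by linarith : (0:ℝ) ≤ 2-a*t))]
    rw [abs_of_neg htn]
    exact abs_le.mpr ⟨by linarith, hub⟩


private theorem quat_norm_step (q w : Quaternion ℝ) (hw : w.re = 0) (x y : ℝ) :
    ‖x • q + y • (q * w)‖ ^ 2 = ‖q‖ ^ 2 * (x ^ 2 + y ^ 2 * ‖w‖ ^ 2) := by
  have h1 : x • q + y • (q * w) = q * ((x : Quaternion ℝ) + y • w) := by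
    rw [mul_add]
    congr 1
    · ext <;> simp [Quaternion.re_mul, Quaternion.re_coe] <;> ring
    · rw [mul_smul_comm]
  rw [h1, norm_mul, mul_pow]
  congr 1
  have h2 : ‖(x : Quaternion ℝ) + y • w‖ ^ 2
      = Quaternion.normSq ((x : Quaternion ℝ) + y • w) := by
    rw [Quaternion.normSq_eq_norm_mul_self, sq]
  have h3 : ‖w‖ ^ 2 = Quaternion.normSq w := by
    rw [Quaternion.normSq_eq_norm_mul_self, sq]
  rw [h2, h3, Quaternion.normSq_def', Quaternion.normSq_def']
  simp [hw]
  ring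


set_option maxHeartbeats 1000000 in
/-- Between the δ(·,·,0)-ball and the δ(·,·,β)-ball, the magnitude of the
error does not increase. -/
theorem error_nonincreasing (α h ε U β A N δβ δ0 : ℝ)
    (hα : 0 < α) (hh : 0 < h) (hε0 : 0 < ε) (hε1 : ε < 1) (hU : 0 < U)
    (hA : A = α * h * (1 - ε) * (2 - α * h * ε) *
      (2 - 2 * (α * h) - α * h * (2 - α * h) * ε + (α * h) ^ 2 * ε ^ 2))
    (hN : N = (1 - 2 * (α * h) * (1 - ε) + (α * h) ^ 2 * ε * (1 + ε)) *
        (ε * (1 + ε)) * U ^ 2 / 2 + (1 + ε) ^ 2 * (h ^ 2 * U ^ 4 / 16))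
    (hδβ : δβ = h * Real.sqrt (N / (A - β)))
    (hδ0 : δ0 = h * Real.sqrt (N / A))
    (hC1 : 0 < α * h ∧ α * h < 2 / 3)
    (hC2 : 0 < β ∧ β < A ∧ A < 1)
    (hC4 : 1 - 2 * (α * h) * (1 - ε) + (α * h) ^ 2 * ε * (1 + ε) ≥ 0)
    (hC3 : δβ < ε)
    (q w : ℕ → Quaternion ℝ) (hw : ∀ k, (w k).re = 0)
    (hdyn : ∀ k, q (k + 1) =
      (1 - α * h * (‖q k‖ ^ 2 - 1)) • q k + (h / 2) • (q k * w k))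
    (e : ℕ → ℝ) (he : ∀ k, e k = ‖q k‖ ^ 2 - 1)
    (k : ℕ) (hwk : ‖w k‖ ≤ U) (hlo : δ0 < |e k|) (hhi : |e k| ≤ δβ) :
    |e (k + 1)| ≤ |e k| := by
  set a := α * h with hadef
  obtain ⟨ha0, ha2⟩ := hC1
  obtain ⟨hβ0, hβA, hA1⟩ := hC2
  have hA0 : 0 < A := hβ0.trans hβA
  set t := e k with htdef
  set W := ‖w k‖ with hWdef
  have hW0 : 0 ≤ W := norm_nonneg _
  -- |t| < ε
  have htε : |t| < ε := lt_of_le_of_lt hhi hC3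
  -- step identity
  have hqnorm : ‖q k‖ ^ 2 = 1 + t := by rw [htdef, he k]; ring
  have hstep : e (k + 1) = t * (1 - 2*a - 2*a*t + a^2*t + a^2*t^2)
      + (h^2/4) * (1+t) * W^2 := by
    rw [he (k+1), hdyn k, quat_norm_step (q k) (w k) (hw k), hqnorm]
    rw [← hWdef]
    ring
  -- N ≥ 0
  have hNnn : 0 ≤ N := by
    rw [hN]
    have h1 : 0 ≤ (1 - 2 * (α * h) * (1 - ε) + (α * h) ^ 2 * ε * (1 + ε)) := hC4
    positivity
  -- h^2 N < A t^2
  have hh2N : h^2 * N < A * t^2 := by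
    have hδ0nn : 0 ≤ δ0 := by
      rw [hδ0]; positivity
    have hsq : δ0 ^ 2 < t ^ 2 := by
      have := mul_self_lt_mul_self hδ0nn hlo
      calc δ0^2 = δ0 * δ0 := sq δ0
        _ < |t| * |t| := this
        _ = t^2 := by rw [← abs_mul, abs_mul_self, sq]
    have hδ0sq : δ0 ^ 2 = h^2 * (N / A) := by
      rw [hδ0, mul_pow, Real.sq_sqrt (by positivity)]
    rw [hδ0sq] at hsq
    have : h^2 * (N/A) * A = h^2 * N := by field_simp
    nlinarith [hsq, hA0]
  -- assemble for key_alg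
  set c : ℝ := h^2 * U^2 / 4 with hcdef
  have hc : 0 < c := by positivity
  have h8 : 2*c*((1 - 2*a*(1-ε) + a^2*(ε*(1+ε)))*(ε*(1+ε))) + (1+ε)^2*c^2
      < (a*(1-ε)*(2-a*ε)*(2-2*a-a*(2-a)*ε+a^2*ε^2)) * t^2 := by
    have hNr : h^2 * N = 2*c*((1 - 2*a*(1-ε) + a^2*(ε*(1+ε)))*(ε*(1+ε))) + (1+ε)^2*c^2 := by
      rw [hN, hcdef, hadef]; ring
    have hAr : A = a*(1-ε)*(2-a*ε)*(2-2*a-a*(2-a)*ε+a^2*ε^2) := by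
      linear_combination hA
    rw [← hNr, ← hAr]; exact hh2N
  have hPs : 0 ≤ 1 - 2*a*(1-ε) + a^2*(ε*(1+ε)) := by
    linarith [hC4]
  have hR0 : 0 ≤ (h^2/4) * (1+t) * W^2 := by
    have h1t : 0 < 1 + t := by
      have := (abs_lt.mp htε).1; linarith
    positivity
  have hRc : (h^2/4) * (1+t) * W^2 ≤ c * (1+t) := by
    have h1t : 0 < 1 + t := by
      have := (abs_lt.mp htε).1; linarith
    have hW2 : W^2 ≤ U^2 := by nlinarith
    rw [hcdef]; nlinarith [mul_le_mul_of_nonneg_left hW2 (by positivity : (0:ℝ) ≤ h^2/4)]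
  have hA1' : a*(1-ε)*(2-a*ε)*(2-2*a-a*(2-a)*ε+a^2*ε^2) < 1 := by
    have hAr : A = a*(1-ε)*(2-a*ε)*(2-2*a-a*(2-a)*ε+a^2*ε^2) := by
      linear_combination hA
    rw [← hAr]; exact hA1
  rw [hstep]
  exact key_alg a ε t c ((h^2/4) * (1+t) * W^2) ha0 ha2 hε0 hε1 hPs htε hc h8 hR0 hRc
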